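/- Let γ = (γ₀, γ₁) be an automorphism of the binary tree acting trivially on level one. Then β = (β₀, β₁) (acting trivially on level one) is conjugate to γ in Ω if and only if either (γ₀ ∼ β₀ and γ₁ ∼ β₁) or (γ₀ ∼ β₁ and γ₁ ∼ β₀), where ∼ denotes conjugacy in Ω. -/

import Mathlib

namespace BinTree

/-- Vertices of the infinite rooted binary tree: finite words over `{0,1}`. -/
abbrev Vertex : Type := List Bool

/-- A function on vertices is a tree automorphism function if it preserves lengths
(levels) and prefixes. -/
def IsTreeAutFun (f : Vertex → Vertex) : Prop :=
  (∀ v, (f v).length = v.length) ∧ ∀ v w : Vertex, (f (v ++ w)).take v.length = f v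

/-- `Ω`: the automorphism group of the infinite rooted binary tree, realized as the
subgroup of permutations of the set of vertices preserving the tree structure. -/
def TreeAut : Subgroup (Equiv.Perm Vertex) where
  carrier := {e | IsTreeAutFun ⇑e}
  one_mem' := ⟨fun _ => rfl, fun v w => by
    simpa using List.take_left (l₁ := v) (l₂ := w)⟩
  mul_mem' := by
    rintro a b ha hb
    obtain ⟨ha1, ha2⟩ := ha
    obtain ⟨hb1, hb2⟩ := hb
    refine ⟨fun v => ?_, fun v w => ?_⟩
    · simp [Equiv.Perm.mul_apply, ha1, hb1]
    · have hb' : b (v ++ w) = b v ++ (b (v ++ w)).drop v.length := by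
        conv_lhs => rw [← List.take_append_drop v.length (b (v ++ w)), hb2]
      have hlen : (b v).length = v.length := hb1 v
      calc ((a * b) (v ++ w)).take v.length
          = (a (b v ++ (b (v ++ w)).drop v.length)).take v.length := by
            rw [Equiv.Perm.mul_apply, ← hb']
        _ = a (b v) := by rw [← hlen]; exact ha2 _ _
        _ = (a * b) v := rfl
  inv_mem' := by
    intro a ha
    obtain ⟨ha1, ha2⟩ := ha
    show IsTreeAutFun ⇑a⁻¹
    have hlen : ∀ v : Vertex, (a⁻¹ v).length = v.length := by
      intro v
      have h := ha1 (a⁻¹ v)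
      rw [(Equiv.Perm.eq_inv_iff_eq (f := a)).mp rfl] at h
      exact h.symm ▸ rfl
    refine ⟨hlen, fun v w => ?_⟩
    have htl : ((a⁻¹ (v ++ w)).take v.length).length = v.length := by
      rw [List.length_take, hlen, List.length_append]
      omega
    have key : a ((a⁻¹ (v ++ w)).take v.length) = v := by
      have h2 := ha2 ((a⁻¹ (v ++ w)).take v.length) ((a⁻¹ (v ++ w)).drop v.length)
      rw [List.take_append_drop, htl, (Equiv.Perm.eq_inv_iff_eq (f := a)).mp rfl] at h2
      rw [← h2]
      simpa using List.take_left (l₁ := v) (l₂ := w)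
    have h3 := congrArg (⇑a⁻¹) key
    rwa [(Equiv.Perm.inv_eq_iff_eq (f := a)).mpr rfl] at h3

/-- wreath recursion, forward map: `(g,h)σᵗ` -/
def wrFun (g h : Vertex → Vertex) (t : Bool) : Vertex → Vertex
  | [] => []
  | x :: v => (xor x t) :: (cond x (h v) (g v))

/-- wreath recursion, inverse map -/
def wrFunInv (g h : Vertex → Vertex) (t : Bool) : Vertex → Vertex
  | [] => []
  | y :: w => (xor y t) :: (cond (xor y t) (h w) (g w))

/-- `(g,h)σᵗ` as a permutation of the vertices. -/
def wrPerm (g h : Equiv.Perm Vertex) (t : Bool) : Equiv.Perm Vertex where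
  toFun := wrFun ⇑g ⇑h t
  invFun := wrFunInv ⇑g.symm ⇑h.symm t
  left_inv := by
    intro v
    cases v with
    | nil => rfl
    | cons x v => cases x <;> cases t <;> simp [wrFun, wrFunInv]
  right_inv := by
    intro v
    cases v with
    | nil => rfl
    | cons x v => cases x <;> cases t <;> simp [wrFun, wrFunInv]

/-- The element `(g,h)σᵗ` of `Ω`: acts on the first level by `σᵗ` (where `σ` is the
swap of the two level-one subtrees), with section `g` at the vertex `0` and section
`h` at the vertex `1`.  Thus `(γ₀,γ₁)τ` of the wreath recursion
`Ω ≃ (Ω × Ω) ⋊ S₂` is `wr γ₀ γ₁ t` (`t = true` iff `τ = σ`). -/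
def wr (g h : TreeAut) (t : Bool) : TreeAut :=
  ⟨wrPerm g.1 h.1 t, by
    have hg : IsTreeAutFun ⇑g.1 := g.2
    have hh : IsTreeAutFun ⇑h.1 := h.2
    constructor
    · intro v
      cases v with
      | nil => rfl
      | cons x v =>
        cases x <;> simp [wrPerm, wrFun, hg.1, hh.1]
    · intro v w
      cases v with
      | nil => simp [wrPerm, wrFun]
      | cons x v =>
        cases x <;> simp [wrPerm, wrFun, hg.2, hh.2]⟩

/-- Application of a tree automorphism to a vertex. -/
def ap (γ : TreeAut) (v : Vertex) : Vertex := γ.1 v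

/-- The permutation induced by `γ ∈ Ω` on level `n` of the tree. -/
def levelPerm (n : ℕ) (γ : TreeAut) : Equiv.Perm (List.Vector Bool n) where
  toFun v := ⟨γ.1 v.1, by
    have h : IsTreeAutFun ⇑γ.1 := γ.2
    rw [h.1 v.1]; exact v.2⟩
  invFun v := ⟨γ.1.symm v.1, by
    have h : IsTreeAutFun ⇑γ.1 := γ.2
    have h2 := h.1 (γ.1.symm v.1)
    rw [Equiv.apply_symm_apply] at h2
    exact h2.symm.trans v.2⟩
  left_inv v := Subtype.ext (Equiv.symm_apply_apply _ _)
  right_inv v := Subtype.ext (Equiv.apply_symm_apply _ _)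

/-- Restriction to level `n` as a group homomorphism. -/
def levelHom (n : ℕ) : TreeAut →* Equiv.Perm (List.Vector Bool n) where
  toFun := levelPerm n
  map_one' := Equiv.ext fun v => Subtype.ext rfl
  map_mul' := fun g h => Equiv.ext fun v => Subtype.ext rfl

/-- `sgn_n`: the sign of the permutation induced on level `n`. -/
def sgn (n : ℕ) (γ : TreeAut) : ℤˣ := Equiv.Perm.sign (levelPerm n γ)

/-- An odometer: acts as a single `2^n`-cycle on each level `n ≥ 1`. -/
def IsOdometer (γ : TreeAut) : Prop :=
  ∀ n : ℕ, 1 ≤ n → (levelPerm n γ).IsCycle ∧ (levelPerm n γ).support = Finset.univ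

/-- The profinite topology on `Ω`: the coarsest topology making all level
restrictions (to the discrete finite groups) continuous. -/
instance : TopologicalSpace TreeAut :=
  ⨅ n : ℕ, TopologicalSpace.induced (levelPerm n) ⊥

/-- A vertex `w` is in a stable cycle of `γ` of length `k`: its `γ`-orbit has exactly
`k` elements, and for every level `m` above the level of `w`, all level-`m` vertices
lying above this orbit are in one single `γ`-cycle (necessarily of length
`2^(m - n) * k`, which we record via the periodicity condition). -/
def InStableCycle (γ : TreeAut) (w : Vertex) (k : ℕ) : Prop :=
  0 < k ∧ ap (γ ^ k) w = w ∧ (∀ j : ℕ, 0 < j → j < k → ap (γ ^ j) w ≠ w) ∧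
  (∀ u : Vertex, w.length < u.length → (∃ i : ℕ, u.take w.length = ap (γ ^ i) w) →
    (ap (γ ^ (2 ^ (u.length - w.length) * k)) u = u ∧
      ∀ u' : Vertex, u'.length = u.length →
        (∃ i : ℕ, u'.take w.length = ap (γ ^ i) w) → ∃ j : ℕ, ap (γ ^ j) u = u'))

/-- Self-similar subgroup: closed under taking sections (here the section of `γ` at
the first-level vertex `x` is characterized by `(xv)γ = (x)γ ⬝ (v)γₓ`). -/
def SelfSimilar (H : Subgroup TreeAut) : Prop :=
  ∀ γ ∈ H, ∀ x : Bool, ∀ δ : TreeAut,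
    (∀ v : Vertex, ap γ (x :: v) = ap γ [x] ++ ap δ v) → δ ∈ H


/-! ### Auxiliary lemmas for the conjugacy criterion -/

private lemma aut_cons (δ : TreeAut) (x : Bool) (v : Vertex) :
    δ.1 (x :: v) = δ.1 [x] ++ (δ.1 (x :: v)).tail := by
  have h := δ.2
  have h2 := h.2 [x] v
  simp only [List.length_cons, List.length_nil, List.singleton_append] at h2
  cases hl : δ.1 (x :: v) with
  | nil =>
    exfalso
    have := h.1 (x :: v)
    rw [hl] at this
    simp at this
  | cons a rest =>
    rw [hl] at h2
    simp only [List.take_succ_cons, List.take_zero] at h2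
    rw [← h2]
    rfl

private lemma nil_map (δ : TreeAut) : δ.1 [] = [] := by
  have := δ.2.1 ([] : Vertex)
  simpa using List.length_eq_zero_iff.mp this

private lemma exists_single (δ : TreeAut) (y : Bool) : ∃ b, δ.1 [y] = [b] := by
  have hlen := δ.2.1 [y]
  cases hl : δ.1 [y] with
  | nil => rw [hl] at hlen; simp at hlen
  | cons a rest =>
    rw [hl] at hlen
    simp at hlen
    exact ⟨a, by rw [hlen]⟩

private lemma single_map (δ : TreeAut) (x : Bool) :
    δ.1 [x] = [xor x (δ.1 [false]).headI] := by
  obtain ⟨b0, hb0⟩ := exists_single δ false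
  obtain ⟨b1, hb1⟩ := exists_single δ true
  have hne : b1 ≠ b0 := by
    intro h
    have : δ.1 [true] = δ.1 [false] := by rw [hb0, hb1, h]
    have := δ.1.injective this
    simp at this
  cases x with
  | false => rw [hb0]; simp
  | true =>
    rw [hb1, hb0]
    simp only [List.headI]
    cases b0 <;> cases b1 <;> simp_all

/-- The section of `δ` at the first-level vertex `x`, as a permutation. -/
private def secPerm (δ : TreeAut) (x : Bool) : Equiv.Perm Vertex where
  toFun v := (δ.1 (x :: v)).tail
  invFun w := (δ.1.symm (δ.1 [x] ++ w)).tail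
  left_inv v := by
    show ((δ.1.symm (δ.1 [x] ++ (δ.1 (x :: v)).tail))).tail = v
    rw [← aut_cons]
    simp
  right_inv w := by
    show ((δ.1 (x :: (δ.1.symm (δ.1 [x] ++ w)).tail))).tail = w
    obtain ⟨b, hb⟩ := exists_single δ x
    set u := δ.1.symm (δ.1 [x] ++ w) with hu
    have hdu : δ.1 u = δ.1 [x] ++ w := by rw [hu]; simp
    have hune : u ≠ [] := by
      intro h
      rw [h, nil_map, hb] at hdu
      simp at hdu
    obtain ⟨y, u', huy⟩ := List.exists_cons_of_ne_nil hune
    have hkey := aut_cons δ y u'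
    rw [← huy, hdu, hb] at hkey
    obtain ⟨c, hc⟩ := exists_single δ y
    rw [hc] at hkey
    simp only [List.singleton_append, List.tail_cons, List.cons_append,
      List.cons.injEq] at hkey
    have hyx : y = x := by
      have : δ.1 [y] = δ.1 [x] := by rw [hc, hb, hkey.1]
      have := δ.1.injective this
      simpa using this
    have hutail : u.tail = u' := by rw [huy]; rfl
    rw [← hutail, hyx] at huy
    rw [← huy, hdu, hb]
    rfl

private lemma secPerm_mem (δ : TreeAut) (x : Bool) : IsTreeAutFun ⇑(secPerm δ x) := by
  constructor
  · intro v
    show ((δ.1 (x :: v)).tail).length = v.length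
    have := δ.2.1 (x :: v)
    simp [List.length_tail, this]
  · intro v w
    show ((δ.1 (x :: (v ++ w))).tail).take v.length = (δ.1 (x :: v)).tail
    have h2 := δ.2.2 (x :: v) w
    simp only [List.cons_append, List.length_cons] at h2
    rw [← h2]
    cases hl : δ.1 (x :: (v ++ w)) with
    | nil => simp
    | cons a rest => simp

/-- The section of `δ` at the first-level vertex `x`, as an element of `Ω`. -/
private def sec (δ : TreeAut) (x : Bool) : TreeAut := ⟨secPerm δ x, secPerm_mem δ x⟩

private lemma wr_apply (g h : TreeAut) (t x : Bool) (v : Vertex) :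
    (wr g h t).1 (x :: v) = (xor x t) :: cond x (h.1 v) (g.1 v) := rfl

private lemma wr_apply_nil (g h : TreeAut) (t : Bool) :
    (wr g h t).1 [] = [] := rfl

private lemma wr_sec (δ : TreeAut) :
    wr (sec δ false) (sec δ true) (δ.1 [false]).headI = δ := by
  apply Subtype.ext
  apply Equiv.ext
  intro v
  cases v with
  | nil => rw [show ∀ w : Vertex, δ.1 w = δ.1.toFun w from fun _ => rfl] at *
           exact (wr_apply_nil _ _ _).trans (nil_map δ).symm
  | cons x v =>
    refine (wr_apply _ _ _ x v).trans ?_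
    rw [aut_cons δ x v, single_map δ x]
    cases x <;> rfl

private lemma wr_mul (g h g' h' : TreeAut) (t t' : Bool) :
    wr g h t * wr g' h' t' =
      wr ((cond t' h g) * g') ((cond t' g h) * h') (xor t t') := by
  apply Subtype.ext
  apply Equiv.ext
  intro v
  have hmul : ∀ (a b : TreeAut) (w : Vertex), (a * b).1 w = a.1 (b.1 w) := fun _ _ _ => rfl
  cases v with
  | nil =>
    rw [hmul, wr_apply_nil, wr_apply_nil, wr_apply_nil]
  | cons x v =>
    rw [hmul, wr_apply, wr_apply]
    cases x <;> cases t' <;>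
      simp [wr_apply, hmul]

private lemma wr_inj {g h g' h' : TreeAut} {t t' : Bool}
    (H : wr g h t = wr g' h' t') : g = g' ∧ h = h' ∧ t = t' := by
  have hf : ∀ v : Vertex, (wr g h t).1 v = (wr g' h' t').1 v := by
    intro v; rw [H]
  have h0 : ∀ v : Vertex, (xor false t) :: g.1 v = (xor false t') :: g'.1 v := by
    intro v
    have := hf (false :: v)
    rwa [wr_apply, wr_apply] at this
  have h1 : ∀ v : Vertex, (xor true t) :: h.1 v = (xor true t') :: h'.1 v := by
    intro v
    have := hf (true :: v)
    rwa [wr_apply, wr_apply] at this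
  have ht : t = t' := by have := List.cons_eq_cons.mp (h0 []); simpa using this.1
  refine ⟨?_, ?_, ht⟩
  · apply Subtype.ext; apply Equiv.ext; intro v
    exact (List.cons_eq_cons.mp (h0 v)).2
  · apply Subtype.ext; apply Equiv.ext; intro v
    exact (List.cons_eq_cons.mp (h1 v)).2

/-- `(γ₀,γ₁)` is conjugate to `(β₀,β₁)` in `Ω` iff
(`γ₀ ∼ β₀` and `γ₁ ∼ β₁`) or (`γ₀ ∼ β₁` and `γ₁ ∼ β₀`). -/
theorem conj_wr_id_iff (γ₀ γ₁ β₀ β₁ : TreeAut) :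
    IsConj (wr γ₀ γ₁ false) (wr β₀ β₁ false) ↔
      (IsConj γ₀ β₀ ∧ IsConj γ₁ β₁) ∨ (IsConj γ₀ β₁ ∧ IsConj γ₁ β₀) := by
  constructor
  · intro hc
    obtain ⟨c, hc⟩ := isConj_iff.mp hc
    have hc' : c * wr γ₀ γ₁ false = wr β₀ β₁ false * c := by
      rw [← hc]; group
    obtain ⟨a, b, t, rfl⟩ : ∃ a b t, c = wr a b t :=
      ⟨sec c false, sec c true, (c.1 [false]).headI, (wr_sec c).symm⟩
    rw [wr_mul, wr_mul] at hc'
    simp only [Bool.cond_false, Bool.xor_false, Bool.false_xor] at hc'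
    obtain ⟨h0, h1, -⟩ := wr_inj hc'
    cases t with
    | false =>
      simp only [Bool.cond_false] at h0 h1
      exact Or.inl ⟨isConj_iff.mpr ⟨a, by rw [h0]; group⟩,
        isConj_iff.mpr ⟨b, by rw [h1]; group⟩⟩
    | true =>
      simp only [Bool.cond_true] at h0 h1
      exact Or.inr ⟨isConj_iff.mpr ⟨a, by rw [h0]; group⟩,
        isConj_iff.mpr ⟨b, by rw [h1]; group⟩⟩
  · rintro (⟨h0, h1⟩ | ⟨h0, h1⟩)
    · obtain ⟨a, ha⟩ := isConj_iff.mp h0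
      obtain ⟨b, hb⟩ := isConj_iff.mp h1
      refine isConj_iff.mpr ⟨wr a b false, ?_⟩
      have ha' : a * γ₀ = β₀ * a := by rw [← ha]; group
      have hb' : b * γ₁ = β₁ * b := by rw [← hb]; group
      have : wr a b false * wr γ₀ γ₁ false = wr β₀ β₁ false * wr a b false := by
        rw [wr_mul, wr_mul]
        simp only [Bool.cond_false, Bool.xor_false, Bool.false_xor]
        rw [ha', hb']
      rw [this]; group
    · obtain ⟨a, ha⟩ := isConj_iff.mp h0
      obtain ⟨b, hb⟩ := isConj_iff.mp h1
      refine isConj_iff.mpr ⟨wr a b true, ?_⟩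
      have ha' : a * γ₀ = β₁ * a := by rw [← ha]; group
      have hb' : b * γ₁ = β₀ * b := by rw [← hb]; group
      have : wr a b true * wr γ₀ γ₁ false = wr β₀ β₁ false * wr a b true := by
        rw [wr_mul, wr_mul]
        simp only [Bool.cond_false, Bool.cond_true, Bool.xor_false, Bool.false_xor]
        rw [ha', hb']
      rw [this]; group

end BinTree
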